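/- Let f : T² → T² be an area preserving toral endomorphism. Then f is not transitive if and only if there exists a complementary pair of strictly f-invariant regular open sets U, V ⊂ T², i.e. non-empty regular open sets with f⁻¹(U) = U, f⁻¹(V) = V, and U = T² \ closure(V). -/

import Mathlib

open MeasureTheory Topology Polynomial Set

theorem Real.fact_zero_lt_one : Fact ((0 : ℝ) < 1) :=
  ⟨zero_lt_one⟩

attribute [local instance] Real.fact_zero_lt_one

noncomputable section

/-- The two-dimensional torus `ℝ²/ℤ²`. -/
abbrev T2 : Type := AddCircle (1 : ℝ) × AddCircle (1 : ℝ)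

/-- The canonical projection `π : ℝ² → T²`. -/
def pr : ℝ × ℝ → T2 := fun p => ((p.1 : AddCircle (1 : ℝ)), (p.2 : AddCircle (1 : ℝ)))

/-- The linear action of a `2×2` integer matrix on `ℝ²`. -/
def matAct (A : Matrix (Fin 2) (Fin 2) ℤ) (p : ℝ × ℝ) : ℝ × ℝ :=
  (((A 0 0 : ℤ) : ℝ) * p.1 + ((A 0 1 : ℤ) : ℝ) * p.2,
   ((A 1 0 : ℤ) : ℝ) * p.1 + ((A 1 1 : ℤ) : ℝ) * p.2)

/-- The action of a `2×2` integer matrix on `ℤ² ≅ π₁(T²)`. -/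
def matActZ (A : Matrix (Fin 2) (Fin 2) ℤ) (v : ℤ × ℤ) : ℤ × ℤ :=
  (A 0 0 * v.1 + A 0 1 * v.2, A 1 0 * v.1 + A 1 1 * v.2)

/-- `f` preserves the Haar (Lebesgue) measure of the torus:
`λ(f⁻¹(A)) = λ(A)` for every Borel set `A`. -/
def AreaPreserving (f : T2 → T2) : Prop :=
  ∀ s : Set T2, MeasurableSet s → volume (f ⁻¹' s) = volume s

/-- `f` is topologically transitive: some forward orbit is dense. -/
def TopTransitive (f : T2 → T2) : Prop :=
  ∃ x : T2, Dense (Set.range fun n : ℕ => f^[n] x)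

/-- The open set is regular: it equals the interior of its closure. -/
def IsRegularOpenSet (U : Set T2) : Prop :=
  U = interior (closure U)

/-- A connected open set `U ⊆ T²` is elementary if the canonical projection `pr`
restricts to a homeomorphism from each connected component of `pr ⁻¹' U` onto `U`. -/
def IsElementary (U : Set T2) : Prop :=
  ∀ x ∈ pr ⁻¹' U,
    ∃ e : (connectedComponentIn (pr ⁻¹' U) x) ≃ₜ U,
      ∀ y : connectedComponentIn (pr ⁻¹' U) x, (e y : T2) = pr (y : ℝ × ℝ)

/-- Iterates preserve strictly invariant sets. -/
lemma iterate_preimage_inv {f : T2 → T2} {U : Set T2} (h : f ⁻¹' U = U) :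
    ∀ n : ℕ, (f^[n]) ⁻¹' U = U := by
  intro n
  induction n with
  | zero => simp
  | succ n ih => rw [Function.iterate_succ, Set.preimage_comp, ih, h]

/-- From a pair of nonempty open sets that never mix, construct the complementary
pair of strictly invariant regular open sets. -/
lemma exists_pair_of_not_mixing {f : T2 → T2} (hc : Continuous f) (ho : IsOpenMap f)
    (hpres : AreaPreserving f) {A B : Set T2} (hA : IsOpen A) (hAne : A.Nonempty)
    (hB : IsOpen B) (hBne : B.Nonempty)
    (hdisj : ∀ n : ℕ, A ∩ (f^[n]) ⁻¹' B = ∅) :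
    ∃ U V : Set T2, U.Nonempty ∧ V.Nonempty ∧
      IsRegularOpenSet U ∧ IsRegularOpenSet V ∧
      f ⁻¹' U = U ∧ f ⁻¹' V = V ∧ U = (closure V)ᶜ := by
  set W : Set T2 := ⋃ n : ℕ, (f^[n]) ⁻¹' B with hWdef
  have hWopen : IsOpen W := isOpen_iUnion fun n => hB.preimage (hc.iterate n)
  have hBW : B ⊆ W := by
    intro x hx
    exact Set.mem_iUnion.2 ⟨0, by simpa using hx⟩
  have hWne : W.Nonempty := hBne.mono hBW
  have hpre : f ⁻¹' W ⊆ W := by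
    rw [hWdef, Set.preimage_iUnion]
    apply Set.iUnion_subset
    intro n
    rw [← Set.preimage_comp, ← Function.iterate_succ]
    exact Set.subset_iUnion (fun m : ℕ => (f^[m]) ⁻¹' B) (n + 1)
  have hmeas : volume (f ⁻¹' W) = volume W := hpres W hWopen.measurableSet
  -- `W ⊆ closure (f ⁻¹' W)` : the preimage is dense in `W` by measure preservation
  have hWsub : W ⊆ closure (f ⁻¹' W) := by
    intro x hx
    rw [mem_closure_iff]
    intro N hN hxN
    by_contra hcon
    rw [Set.not_nonempty_iff_eq_empty] at hcon
    set G : Set T2 := N ∩ W with hGdef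
    have hGopen : IsOpen G := hN.inter hWopen
    have hGpos : 0 < volume G := hGopen.measure_pos volume ⟨x, hxN, hx⟩
    have hsub : f ⁻¹' W ⊆ W \ G := by
      intro y hy
      refine ⟨hpre hy, fun hyG => ?_⟩
      exact Set.eq_empty_iff_forall_notMem.mp hcon y ⟨hyG.1, hy⟩
    have hWG : volume (W \ G) = volume W - volume G := by
      apply measure_diff (fun y hy => hy.2) hGopen.measurableSet.nullMeasurableSet
        (measure_ne_top volume G)
    have h1 : volume W ≤ volume W - volume G := by
      calc volume W = volume (f ⁻¹' W) := hmeas.symm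
        _ ≤ volume (W \ G) := measure_mono hsub
        _ = volume W - volume G := hWG
    have h2 : volume W - volume G < volume W := by
      apply ENNReal.sub_lt_self (measure_ne_top volume W) _ hGpos.ne'
      exact (lt_of_lt_of_le hGpos (measure_mono fun y hy => hy.2)).ne'
    exact absurd (lt_of_le_of_lt h1 h2) (lt_irrefl _)
  have hcl : closure (f ⁻¹' W) = closure W :=
    subset_antisymm (closure_mono hpre) (closure_minimal hWsub isClosed_closure)
  -- the regular open hull of `W`
  set U : Set T2 := interior (closure W) with hUdef
  have hWU : W ⊆ U := interior_maximal subset_closure hWopen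
  have hclU : closure U = closure W := by
    apply subset_antisymm
    · calc closure U ⊆ closure (closure W) := closure_mono interior_subset
        _ = closure W := closure_closure
    · exact closure_mono hWU
  have hUreg : IsRegularOpenSet U := by
    rw [IsRegularOpenSet, hclU]
  have hUinv : f ⁻¹' U = U := by
    rw [hUdef, ho.preimage_interior_eq_interior_preimage hc,
      ho.preimage_closure_eq_closure_preimage hc, hcl]
  -- the complementary set
  set V : Set T2 := (closure U)ᶜ with hVdef
  have hclV : closure V = Uᶜ := by
    rw [hVdef, closure_compl, ← hUreg]
  have hVinv : f ⁻¹' V = V := by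
    rw [hVdef, Set.preimage_compl, ho.preimage_closure_eq_closure_preimage hc, hUinv]
  have hVreg : IsRegularOpenSet V := by
    rw [IsRegularOpenSet, hclV, interior_compl]
  have hAW : Disjoint A W := by
    rw [Set.disjoint_iff_inter_eq_empty, hWdef, Set.inter_iUnion]
    simp only [hdisj, Set.iUnion_empty]
  have hAV : A ⊆ V := by
    rw [hVdef, hclU]
    exact Set.subset_compl_iff_disjoint_left.mpr (hAW.closure_right hA).symm
  refine ⟨U, V, hWne.mono hWU, hAne.mono hAV, hUreg, hVreg, hUinv, hVinv, ?_⟩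
  rw [hclV, compl_compl]

/-- Birkhoff's transitivity argument via the Baire category theorem. -/
lemma transitive_of_mixing {f : T2 → T2} (hc : Continuous f)
    (h : ∀ A B : Set T2, IsOpen A → A.Nonempty → IsOpen B → B.Nonempty →
      ∃ n : ℕ, (A ∩ (f^[n]) ⁻¹' B).Nonempty) : TopTransitive f := by
  obtain ⟨b, hbc, -, hbasis⟩ := TopologicalSpace.exists_countable_basis T2
  set S : Set (Set T2) := {t ∈ b | t.Nonempty} with hSdef
  have hScount : S.Countable := hbc.mono (Set.sep_subset _ _)
  set G : Set T2 → Set T2 := fun s => ⋃ n : ℕ, (f^[n]) ⁻¹' s with hGdef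
  have hGopen : ∀ s ∈ S, IsOpen (G s) := fun s hs =>
    isOpen_iUnion fun n => (hbasis.isOpen hs.1).preimage (hc.iterate n)
  have hGdense : ∀ s ∈ S, Dense (G s) := by
    intro s hs
    rw [dense_iff_inter_open]
    intro A hA hAne
    obtain ⟨n, x, hx1, hx2⟩ := h A s hA hAne (hbasis.isOpen hs.1) hs.2
    exact ⟨x, hx1, Set.mem_iUnion.2 ⟨n, hx2⟩⟩
  have hd : Dense (⋂ s ∈ S, G s) := dense_biInter_of_isOpen hGopen hScount hGdense
  obtain ⟨x, hx⟩ := hd.nonempty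
  refine ⟨x, ?_⟩
  rw [hbasis.dense_iff]
  intro o ho hone
  have hxo : x ∈ G o := by
    have := Set.mem_iInter₂.mp hx o ⟨ho, hone⟩
    exact this
  obtain ⟨n, hn⟩ := Set.mem_iUnion.mp hxo
  exact ⟨f^[n] x, hn, ⟨n, rfl⟩⟩

/-- An area preserving toral endomorphism is not transitive iff there is
a complementary pair of strictly invariant non-empty regular open sets. -/
theorem statement4
    (f : T2 → T2) (hf : IsLocalHomeomorph f) (hpres : AreaPreserving f) :
    ¬ TopTransitive f ↔
      ∃ U V : Set T2, U.Nonempty ∧ V.Nonempty ∧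
        IsRegularOpenSet U ∧ IsRegularOpenSet V ∧
        f ⁻¹' U = U ∧ f ⁻¹' V = V ∧ U = (closure V)ᶜ := by
  constructor
  · intro hnt
    by_contra hno
    apply hnt
    apply transitive_of_mixing hf.continuous
    intro A B hA hAne hB hBne
    by_contra hcon
    push_neg at hcon
    exact hno (exists_pair_of_not_mixing hf.continuous hf.isOpenMap hpres
      hA hAne hB hBne hcon)
  · rintro ⟨U, V, hUne, hVne, hUreg, hVreg, hUinv, hVinv, hUV⟩ ⟨x, hx⟩
    have hUopen : IsOpen U := by rw [hUreg]; exact isOpen_interior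
    have hVopen : IsOpen V := by rw [hVreg]; exact isOpen_interior
    have hxU : x ∈ U := by
      obtain ⟨y, hy1, n, rfl⟩ := (dense_iff_inter_open.mp hx U hUopen hUne)
      have := iterate_preimage_inv hUinv n
      rw [← this]; exact hy1
    have hxV : x ∈ V := by
      obtain ⟨y, hy1, n, rfl⟩ := (dense_iff_inter_open.mp hx V hVopen hVne)
      have := iterate_preimage_inv hVinv n
      rw [← this]; exact hy1
    rw [hUV] at hxU
    exact hxU (subset_closure hxV)
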